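/- Let T = (T(n,k))_{n,k≥0} be the array with entries in ℤ[a,c,e] defined by T(0,k) = δ_{k0} and, for n ≥ 1, T(n,k) = (a(n−k)+c)·T(n−1,k−1) + e·T(n−1,k), with T(n,k) = 0 for k < 0 or k > n. Then for all 0 ≤ k ≤ n, T(n,k) equals the sum, over all set partitions π of {1,2,…,n+1} into exactly n+1−k nonempty blocks, of the product over i = 2,…,n+1 of the weight w_π(i), where w_π(i) = c if smallest(π,i) = 1, w_π(i) = e if smallest(π,i) = i, and w_π(i) = a if smallest(π,i) ∉ {1, i}. -/

import Mathlib

/- The polynomial ring ℤ[a,c,e]: variable 0 ↦ a, 1 ↦ c, 2 ↦ e. -/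
noncomputable def aVar : MvPolynomial (Fin 3) ℤ := MvPolynomial.X 0
noncomputable def cVar : MvPolynomial (Fin 3) ℤ := MvPolynomial.X 1
noncomputable def eVar : MvPolynomial (Fin 3) ℤ := MvPolynomial.X 2

/-- The array `T(n,k)` with entries in ℤ[a,c,e], defined by `T(0,k) = δ_{k0}` and
`T(n,k) = (a(n−k)+c)·T(n−1,k−1) + e·T(n−1,k)` for `n ≥ 1`.  The second index
ranges over ℤ, so the conventions `T(n,k) = 0` for `k < 0` or `k > n` are
automatic. -/
noncomputable def T : ℕ → ℤ → MvPolynomial (Fin 3) ℤ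
  | 0, k => if k = 0 then 1 else 0
  | n + 1, k =>
      (aVar * (((n : ℤ) + 1 - k : ℤ) : MvPolynomial (Fin 3) ℤ) + cVar) * T n (k - 1)
        + eVar * T n k

/-- `smallest π i`: the smallest element of the block of the set partition `π`
containing `i`.  Here the ground set `{1,…,n+1}` is modelled by `Fin (n+1)`
(so the element `1` corresponds to `0 : Fin (n+1)`). -/
noncomputable def smallest {n : ℕ} (π : Finpartition (Finset.univ : Finset (Fin (n + 1))))
    (i : Fin (n + 1)) : Fin (n + 1) :=
  (π.part i).min' ⟨i, π.mem_part (Finset.mem_univ i)⟩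

/-- The weight `w_π(i)`: `c` if `smallest(π,i) = 1`, `e` if `smallest(π,i) = i`,
and `a` otherwise. -/
noncomputable def weight {n : ℕ} (π : Finpartition (Finset.univ : Finset (Fin (n + 1))))
    (i : Fin (n + 1)) : MvPolynomial (Fin 3) ℤ :=
  if smallest π i = 0 then cVar else if smallest π i = i then eVar else aVar

open Finset

section Aux

/-- `Good s` : `s` is idempotent and decreasing, i.e. `s` is the "smallest element of
my block" function of a set partition. -/
def Good {n : ℕ} (s : Fin (n + 1) → Fin (n + 1)) : Prop :=
  ∀ i, s (s i) = s i ∧ s i ≤ i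

instance {n : ℕ} (s : Fin (n + 1) → Fin (n + 1)) : Decidable (Good s) := by
  unfold Good; infer_instance

/-- per-element weight as a function of `i` and `s i`. -/
noncomputable def wf {n : ℕ} (i j : Fin (n + 1)) : MvPolynomial (Fin 3) ℤ :=
  if j = 0 then cVar else if j = i then eVar else aVar

noncomputable def W {n : ℕ} (s : Fin (n + 1) → Fin (n + 1)) : MvPolynomial (Fin 3) ℤ :=
  ∏ i ∈ Finset.univ.filter (fun i : Fin (n + 1) => i ≠ 0), wf i (s i)

def fixc {n : ℕ} (s : Fin (n + 1) → Fin (n + 1)) : ℕ :=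
  (Finset.univ.filter (fun i => s i = i)).card

noncomputable def Fn (n m : ℕ) : MvPolynomial (Fin 3) ℤ :=
  ∑ s ∈ Finset.univ.filter (fun s : Fin (n + 1) → Fin (n + 1) => Good s ∧ fixc s = m), W s

variable {n : ℕ}

lemma smallest_mem_part (π : Finpartition (Finset.univ : Finset (Fin (n + 1))))
    (i : Fin (n + 1)) : smallest π i ∈ π.part i := Finset.min'_mem _ _

lemma part_smallest (π : Finpartition (Finset.univ : Finset (Fin (n + 1))))
    (i : Fin (n + 1)) : π.part (smallest π i) = π.part i :=
  π.part_eq_of_mem (π.part_mem.2 (mem_univ i)) (smallest_mem_part π i)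

lemma good_smallest (π : Finpartition (Finset.univ : Finset (Fin (n + 1)))) :
    Good (smallest π) := by
  intro i
  constructor
  · apply le_antisymm
    · exact Finset.min'_le _ _ (by rw [part_smallest]; exact smallest_mem_part π i)
    · apply Finset.le_min'
      intro y hy
      rw [part_smallest] at hy
      exact Finset.min'_le _ _ hy
  · exact Finset.min'_le _ _ (π.mem_part (mem_univ i))

/-- The setoid whose classes are fibers of `s`. -/
def kerS {n : ℕ} (s : Fin (n + 1) → Fin (n + 1)) : Setoid (Fin (n + 1)) where
  r a b := s a = s b
  iseqv := ⟨fun _ => rfl, Eq.symm, Eq.trans⟩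

instance {n : ℕ} (s : Fin (n + 1) → Fin (n + 1)) : DecidableRel (kerS s).r :=
  fun _ _ => instDecidableEqFin _ _ _

/-- The partition associated to a good function. -/
noncomputable def toPart {n : ℕ} (s : Fin (n + 1) → Fin (n + 1)) :
    Finpartition (Finset.univ : Finset (Fin (n + 1))) :=
  Finpartition.ofSetoid (kerS s)

lemma mem_part_toPart {s : Fin (n + 1) → Fin (n + 1)} {a b : Fin (n + 1)} :
    b ∈ (toPart s).part a ↔ s a = s b :=
  Finpartition.mem_part_ofSetoid_iff_rel

lemma smallest_toPart {s : Fin (n + 1) → Fin (n + 1)} (hs : Good s) :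
    smallest (toPart s) = s := by
  funext i
  apply le_antisymm
  · exact Finset.min'_le _ _ (mem_part_toPart.mpr ((hs i).1.symm))
  · apply Finset.le_min'
    intro y hy
    have h1 : s i = s y := mem_part_toPart.mp hy
    calc s i = s (s y) := by rw [← h1, (hs i).1]
    _ ≤ y := by rw [(hs y).1]; exact (hs y).2

lemma toPart_smallest (π : Finpartition (Finset.univ : Finset (Fin (n + 1)))) :
    toPart (smallest π) = π := by
  have hpart : ∀ a, (toPart (smallest π)).part a = π.part a := by
    intro a
    ext b
    rw [mem_part_toPart]
    constructor
    · intro h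
      rw [← part_smallest π a, h, part_smallest π b]
      exact π.mem_part (mem_univ b)
    · intro hb
      have : π.part b = π.part a := π.part_eq_of_mem (π.part_mem.2 (mem_univ a)) hb
      unfold smallest
      congr 1
      exact this.symm
  ext t
  constructor
  · intro ht
    obtain ⟨x, hx⟩ := (toPart (smallest π)).nonempty_of_mem_parts ht
    have : t = π.part x := by
      rw [← (toPart (smallest π)).part_eq_of_mem ht hx, hpart]
    rw [this]; exact π.part_mem.2 (mem_univ x)
  · intro ht
    obtain ⟨x, hx⟩ := π.nonempty_of_mem_parts ht
    have : t = (toPart (smallest π)).part x := by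
      rw [← π.part_eq_of_mem ht hx, hpart]
    rw [this]; exact (toPart (smallest π)).part_mem.2 (mem_univ x)

lemma card_parts_eq_fixc (π : Finpartition (Finset.univ : Finset (Fin (n + 1)))) :
    π.parts.card = fixc (smallest π) := by
  unfold fixc
  apply Finset.card_nbij' (fun t => if h : t.Nonempty then t.min' h else 0)
      (fun i => π.part i)
  · intro t ht
    have hne : t.Nonempty := π.nonempty_of_mem_parts ht
    dsimp only
    rw [dif_pos hne]
    simp only [Finset.mem_coe, mem_filter, mem_univ, true_and]
    have hmem : t.min' hne ∈ t := Finset.min'_mem _ _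
    have : π.part (t.min' hne) = t := π.part_eq_of_mem ht hmem
    unfold smallest
    apply le_antisymm
    · exact Finset.min'_le _ _ (by rw [this]; exact hmem)
    · apply Finset.le_min'
      intro y hy
      rw [this] at hy
      exact Finset.min'_le _ _ hy
  · intro i hi
    exact π.part_mem.2 (mem_univ i)
  · intro t ht
    have hne : t.Nonempty := π.nonempty_of_mem_parts ht
    dsimp only
    rw [dif_pos hne]
    exact π.part_eq_of_mem ht (Finset.min'_mem _ _)
  · intro i hi
    simp only [Finset.mem_coe, mem_filter, mem_univ, true_and] at hi
    have hne : (π.part i).Nonempty := ⟨i, π.mem_part (mem_univ i)⟩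
    dsimp only
    rw [dif_pos hne]
    exact hi
    
/-- Reduction of the theorem's sum to `Fn`. -/
lemma sum_partitions_eq_Fn (m : ℕ) :
    (∑ π : {π : Finpartition (Finset.univ : Finset (Fin (n + 1))) //
            π.parts.card = m},
          ∏ i ∈ Finset.univ.filter (fun i : Fin (n + 1) => i ≠ 0), weight π.1 i)
      = Fn n m := by
  rw [← Finset.sum_subtype (Finset.univ.filter
      (fun π : Finpartition (Finset.univ : Finset (Fin (n + 1))) => π.parts.card = m))
      (by intro x; simp) (fun π => ∏ i ∈ Finset.univ.filter (fun i : Fin (n + 1) => i ≠ 0), weight π i)]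
  unfold Fn
  apply Finset.sum_nbij' (fun π => smallest π) (fun s => toPart s)
  · intro π hπ
    simp only [mem_filter, mem_univ, true_and] at hπ ⊢
    exact ⟨good_smallest π, by rw [← card_parts_eq_fixc, hπ]⟩
  · intro s hs
    simp only [mem_filter, mem_univ, true_and] at hs ⊢
    rw [card_parts_eq_fixc, smallest_toPart hs.1]
    exact hs.2
  · intro π _; exact toPart_smallest π
  · intro s hs
    simp only [mem_filter, mem_univ, true_and] at hs
    exact smallest_toPart hs.1
  · intro π _
    unfold W weight wf
    rfl

/-! ### Recursion for `Fn` -/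

variable {n : ℕ}

lemma good_zero {s : Fin (n + 1) → Fin (n + 1)} (hs : Good s) : s 0 = 0 :=
  Fin.le_zero_iff.mp (hs 0).2

/-- restriction of a function on `Fin (n+2)` to `Fin (n+1)` (junk values truncated). -/
def res (s : Fin (n + 2) → Fin (n + 2)) : Fin (n + 1) → Fin (n + 1) :=
  fun i => ⟨min (s i.castSucc).val n, Nat.lt_succ_of_le (min_le_right _ _)⟩

lemma res_spec {s : Fin (n + 2) → Fin (n + 2)} (hs : Good s) (i : Fin (n + 1)) :
    Fin.castSucc (res s i) = s i.castSucc := by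
  have h2 : (s i.castSucc).val ≤ i.val := (hs i.castSucc).2
  have h3 : i.val ≤ n := Nat.lt_succ_iff.mp i.isLt
  apply Fin.ext
  simp only [Fin.coe_castSucc, res]
  omega

/-- extension of a function on `Fin (n+1)` to `Fin (n+2)`, sending `last` to `j`. -/
def ext2 (s' : Fin (n + 1) → Fin (n + 1)) (j : Fin (n + 2)) : Fin (n + 2) → Fin (n + 2) :=
  fun i => if h : i = Fin.last (n + 1) then j else Fin.castSucc (s' (i.castPred h))

lemma ext2_castSucc (s' : Fin (n + 1) → Fin (n + 1)) (j : Fin (n + 2)) (i : Fin (n + 1)) :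
    ext2 s' j (Fin.castSucc i) = Fin.castSucc (s' i) := by
  have h : Fin.castSucc i ≠ Fin.last (n + 1) := Fin.ne_last_of_lt (Fin.castSucc_lt_last i)
  simp [ext2, h]

lemma ext2_last (s' : Fin (n + 1) → Fin (n + 1)) (j : Fin (n + 2)) :
    ext2 s' j (Fin.last (n + 1)) = j := dif_pos rfl

lemma res_ext2 (s' : Fin (n + 1) → Fin (n + 1)) (j : Fin (n + 2)) :
    res (ext2 s' j) = s' := by
  funext i
  have h1 : ext2 s' j i.castSucc = Fin.castSucc (s' i) := ext2_castSucc s' j i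
  have h3 : (s' i).val ≤ n := Nat.lt_succ_iff.mp (s' i).isLt
  apply Fin.ext
  simp only [res, h1, Fin.coe_castSucc]
  omega

lemma ext2_res {s : Fin (n + 2) → Fin (n + 2)} (hs : Good s) :
    ext2 (res s) (s (Fin.last (n + 1))) = s := by
  funext i
  by_cases h : i = Fin.last (n + 1)
  · rw [h, ext2_last]
  · have : i = Fin.castSucc (i.castPred h) := (Fin.castSucc_castPred i h).symm
    rw [this, ext2_castSucc, res_spec hs]

lemma good_res {s : Fin (n + 2) → Fin (n + 2)} (hs : Good s) : Good (res s) := by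
  intro i
  constructor
  · apply Fin.castSucc_injective
    rw [res_spec hs, res_spec hs, (hs i.castSucc).1]
  · have h2 : (s i.castSucc).val ≤ i.val := (hs i.castSucc).2
    simp only [Fin.le_def, res]
    omega

lemma good_ext2 {s' : Fin (n + 1) → Fin (n + 1)} (hs' : Good s') {j : Fin (n + 2)}
    (hj : j = Fin.last (n + 1) ∨ ∃ j' : Fin (n + 1), j = Fin.castSucc j' ∧ s' j' = j') :
    Good (ext2 s' j) := by
  have key : ext2 s' j j = j := by
    rcases hj with h | ⟨j', rfl, hfix⟩
    · rw [h, ext2_last]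
    · rw [ext2_castSucc, hfix]
  intro i
  by_cases h : i = Fin.last (n + 1)
  · subst h
    rw [ext2_last]
    exact ⟨key, Fin.le_last j⟩
  · have hi : i = Fin.castSucc (i.castPred h) := (Fin.castSucc_castPred i h).symm
    rw [hi, ext2_castSucc, ext2_castSucc]
    exact ⟨by rw [(hs' _).1], Fin.castSucc_le_castSucc_iff.mpr (hs' _).2⟩

lemma fixc_eq {s : Fin (n + 2) → Fin (n + 2)} (hs : Good s) :
    fixc s = fixc (res s) + (if s (Fin.last (n + 1)) = Fin.last (n + 1) then 1 else 0) := by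
  unfold fixc
  rw [Finset.card_filter, Finset.card_filter, Fin.sum_univ_castSucc]
  congr 1
  apply Finset.sum_congr rfl
  intro i _
  have : (s i.castSucc = i.castSucc) ↔ (res s i = i) := by
    rw [← res_spec hs, Fin.castSucc_inj]
  simp only [this]

lemma W_ext2 (s' : Fin (n + 1) → Fin (n + 1)) (j : Fin (n + 2)) :
    W (ext2 s' j) = wf (Fin.last (n + 1)) j * W s' := by
  have hlast0 : (Fin.last (n + 1) : Fin (n + 2)) ≠ 0 := by
    simp [Fin.ext_iff]
  unfold W
  rw [Finset.prod_filter, Finset.prod_filter, Fin.prod_univ_castSucc]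
  rw [if_pos hlast0, ext2_last]
  rw [mul_comm]
  congr 1
  apply Finset.prod_congr rfl
  intro i _
  have h0 : (Fin.castSucc i ≠ 0) ↔ (i ≠ 0) := by
    rw [not_iff_not, Fin.castSucc_eq_zero_iff]
  by_cases hi : i ≠ 0
  · rw [if_pos (h0.mpr hi), if_pos hi]
    rw [ext2_castSucc]
    unfold wf
    simp only [Fin.castSucc_eq_zero_iff, Fin.castSucc_inj]
  · rw [if_neg (fun h => hi (h0.mp h)), if_neg hi]

lemma Fn_zero_blocks (m : ℕ) (hm : m = 0 ∨ n + 1 < m) : Fn n m = 0 := by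
  unfold Fn
  apply Finset.sum_eq_zero
  intro s hs
  simp only [Finset.mem_filter, Finset.mem_univ, true_and] at hs
  exfalso
  obtain ⟨hgood, hfix⟩ := hs
  rcases hm with h | h
  · rw [h] at hfix
    have : (0 : Fin (n + 1)) ∈ Finset.univ.filter (fun i => s i = i) := by
      simp [good_zero hgood]
    rw [Finset.card_eq_zero.mp hfix] at this
    exact absurd this (Finset.notMem_empty _)
  · have := Finset.card_filter_le (Finset.univ : Finset (Fin (n + 1))) (fun i => s i = i)
    rw [Finset.card_univ, Fintype.card_fin] at this
    unfold fixc at hfix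
    omega

lemma last_ne_zero : (Fin.last (n + 1) : Fin (n + 2)) ≠ 0 := by
  simp [Fin.ext_iff]

/-- truncation of `s (last)` to `Fin (n+1)`. -/
def jres (s : Fin (n + 2) → Fin (n + 2)) : Fin (n + 1) :=
  ⟨min (s (Fin.last (n + 1))).val n, Nat.lt_succ_of_le (min_le_right _ _)⟩

lemma jres_spec {s : Fin (n + 2) → Fin (n + 2)} (h : s (Fin.last (n + 1)) ≠ Fin.last (n + 1)) :
    Fin.castSucc (jres s) = s (Fin.last (n + 1)) := by
  have h1 : (s (Fin.last (n + 1))).val < n + 2 := (s (Fin.last (n + 1))).isLt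
  have h2 : (s (Fin.last (n + 1))).val ≠ n + 1 := fun hc => h (Fin.ext hc)
  apply Fin.ext
  simp only [Fin.coe_castSucc, jres]
  omega

lemma card_fix_ne_zero {s' : Fin (n + 1) → Fin (n + 1)} (hs' : Good s') {m : ℕ}
    (hm : fixc s' = m) :
    (Finset.univ.filter (fun j : Fin (n + 1) => j ≠ 0 ∧ s' j = j)).card = m - 1 := by
  have h1 : Finset.univ.filter (fun j : Fin (n + 1) => j ≠ 0 ∧ s' j = j)
      = (Finset.univ.filter (fun j => s' j = j)).erase 0 := by
    ext j
    simp only [Finset.mem_filter, Finset.mem_erase, Finset.mem_univ, true_and]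
    try tauto
  rw [h1, Finset.card_erase_of_mem (by simp [good_zero hs'])]
  unfold fixc at hm
  omega

lemma Fn_succ (m : ℕ) (hm : 1 ≤ m) :
    Fn (n + 1) m = eVar * Fn n (m - 1) + cVar * Fn n m
      + ((m - 1 : ℕ) : MvPolynomial (Fin 3) ℤ) * (aVar * Fn n m) := by
  set L : Fin (n + 2) := Fin.last (n + 1) with hL
  have hsplit1 := Finset.sum_filter_add_sum_filter_not
    (Finset.univ.filter (fun s : Fin (n + 2) → Fin (n + 2) => Good s ∧ fixc s = m))
    (fun s => s L = L) W
  have hsplit2 := Finset.sum_filter_add_sum_filter_not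
    ((Finset.univ.filter (fun s : Fin (n + 2) → Fin (n + 2) => Good s ∧ fixc s = m)).filter
      (fun s => ¬ s L = L))
    (fun s => s L = 0) W
  have sumA : ∑ s ∈ (Finset.univ.filter
        (fun s : Fin (n + 2) → Fin (n + 2) => Good s ∧ fixc s = m)).filter
        (fun s => s L = L), W s = eVar * Fn n (m - 1) := by
    rw [Fn, Finset.mul_sum]
    apply Finset.sum_nbij' res (fun s' => ext2 s' L)
    · intro s hs
      simp only [Finset.mem_filter, Finset.mem_univ, true_and] at hs ⊢
      obtain ⟨⟨hgood, hfix⟩, hsL⟩ := hs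
      refine ⟨good_res hgood, ?_⟩
      have := fixc_eq hgood
      rw [if_pos hsL] at this
      omega
    · intro s' hs'
      simp only [Finset.mem_filter, Finset.mem_univ, true_and] at hs' ⊢
      obtain ⟨hgood, hfix⟩ := hs'
      have hgood2 : Good (ext2 s' L) := good_ext2 hgood (Or.inl rfl)
      have hlast : ext2 s' L L = L := ext2_last s' L
      refine ⟨⟨hgood2, ?_⟩, hlast⟩
      have := fixc_eq hgood2
      rw [if_pos hlast, res_ext2] at this
      omega
    · intro s hs
      simp only [Finset.mem_filter, Finset.mem_univ, true_and] at hs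
      rw [← hs.2, ext2_res hs.1.1]
    · intro s' _
      exact res_ext2 s' L
    · intro s hs
      simp only [Finset.mem_filter, Finset.mem_univ, true_and] at hs
      obtain ⟨⟨hgood, _⟩, hsL⟩ := hs
      calc W s = W (ext2 (res s) (s L)) := by rw [ext2_res hgood]
        _ = wf L (s L) * W (res s) := W_ext2 _ _
        _ = eVar * W (res s) := by
            rw [hsL]; unfold wf; rw [if_neg last_ne_zero, if_pos rfl]
  have sumB : ∑ s ∈ ((Finset.univ.filter
        (fun s : Fin (n + 2) → Fin (n + 2) => Good s ∧ fixc s = m)).filter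
        (fun s => ¬ s L = L)).filter (fun s => s L = 0), W s = cVar * Fn n m := by
    rw [Fn, Finset.mul_sum]
    apply Finset.sum_nbij' res (fun s' => ext2 s' 0)
    · intro s hs
      simp only [Finset.mem_filter, Finset.mem_univ, true_and] at hs ⊢
      obtain ⟨⟨⟨hgood, hfix⟩, hne⟩, _⟩ := hs
      refine ⟨good_res hgood, ?_⟩
      have := fixc_eq hgood
      rw [if_neg hne] at this
      omega
    · intro s' hs'
      simp only [Finset.mem_filter, Finset.mem_univ, true_and] at hs' ⊢
      obtain ⟨hgood, hfix⟩ := hs'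
      have hgood2 : Good (ext2 s' (0 : Fin (n + 2))) :=
        good_ext2 hgood (Or.inr ⟨0, by simp, good_zero hgood⟩)
      have hlast : ext2 s' (0 : Fin (n + 2)) L = 0 := ext2_last s' 0
      have hneL : ext2 s' (0 : Fin (n + 2)) L ≠ L := by
        rw [hlast]; exact (Ne.symm last_ne_zero)
      refine ⟨⟨⟨hgood2, ?_⟩, hneL⟩, hlast⟩
      have := fixc_eq hgood2
      rw [if_neg hneL, res_ext2] at this
      omega
    · intro s hs
      simp only [Finset.mem_filter, Finset.mem_univ, true_and] at hs
      rw [← hs.2, ext2_res hs.1.1.1]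
    · intro s' _
      exact res_ext2 s' 0
    · intro s hs
      simp only [Finset.mem_filter, Finset.mem_univ, true_and] at hs
      obtain ⟨⟨⟨hgood, _⟩, _⟩, hs0⟩ := hs
      calc W s = W (ext2 (res s) (s L)) := by rw [ext2_res hgood]
        _ = wf L (s L) * W (res s) := W_ext2 _ _
        _ = cVar * W (res s) := by rw [hs0]; unfold wf; rw [if_pos rfl]
  have sumC : ∑ s ∈ ((Finset.univ.filter
        (fun s : Fin (n + 2) → Fin (n + 2) => Good s ∧ fixc s = m)).filter
        (fun s => ¬ s L = L)).filter (fun s => ¬ s L = 0), W s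
      = ((m - 1 : ℕ) : MvPolynomial (Fin 3) ℤ) * (aVar * Fn n m) := by
    have step1 : ∑ s ∈ ((Finset.univ.filter
        (fun s : Fin (n + 2) → Fin (n + 2) => Good s ∧ fixc s = m)).filter
        (fun s => ¬ s L = L)).filter (fun s => ¬ s L = 0), W s
        = ∑ p ∈ Finset.univ.filter
            (fun p : (Fin (n + 1) → Fin (n + 1)) × Fin (n + 1) =>
              (Good p.1 ∧ fixc p.1 = m) ∧ p.2 ≠ 0 ∧ p.1 p.2 = p.2),
            aVar * W p.1 := by
      apply Finset.sum_nbij' (fun s => (res s, jres s)) (fun p => ext2 p.1 (Fin.castSucc p.2))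
      · intro s hs
        simp only [Finset.mem_filter, Finset.mem_univ, true_and] at hs ⊢
        obtain ⟨⟨⟨hgood, hfix⟩, hneL⟩, hne0⟩ := hs
        have hcs : Fin.castSucc (jres s) = s L := jres_spec hneL
        refine ⟨⟨good_res hgood, ?_⟩, ?_, ?_⟩
        · have := fixc_eq hgood
          rw [if_neg hneL] at this
          omega
        · intro hc
          apply hne0
          rw [← hcs, hc, Fin.castSucc_zero]
        · apply Fin.castSucc_injective
          rw [res_spec hgood, hcs, (hgood L).1]
      · intro p hp
        simp only [Finset.mem_filter, Finset.mem_univ, true_and] at hp ⊢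
        obtain ⟨⟨hgood, hfix⟩, hp0, hpfix⟩ := hp
        have hgood2 : Good (ext2 p.1 (Fin.castSucc p.2)) :=
          good_ext2 hgood (Or.inr ⟨p.2, rfl, hpfix⟩)
        have hlast : ext2 p.1 (Fin.castSucc p.2) L = Fin.castSucc p.2 := ext2_last _ _
        have hneL : ext2 p.1 (Fin.castSucc p.2) L ≠ L := by
          rw [hlast]; exact Fin.ne_last_of_lt (Fin.castSucc_lt_last p.2)
        have hne0 : ext2 p.1 (Fin.castSucc p.2) L ≠ 0 := by
          rw [hlast]
          simp only [ne_eq, Fin.castSucc_eq_zero_iff]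
          exact hp0
        refine ⟨⟨⟨hgood2, ?_⟩, hneL⟩, hne0⟩
        have := fixc_eq hgood2
        rw [if_neg hneL, res_ext2] at this
        omega
      · intro s hs
        simp only [Finset.mem_filter, Finset.mem_univ, true_and] at hs
        obtain ⟨⟨⟨hgood, _⟩, hneL⟩, _⟩ := hs
        rw [jres_spec hneL, ext2_res hgood]
      · intro p hp
        simp only [Finset.mem_filter, Finset.mem_univ, true_and] at hp
        have hlast : ext2 p.1 (Fin.castSucc p.2) L = Fin.castSucc p.2 := ext2_last _ _
        have hneL : ext2 p.1 (Fin.castSucc p.2) L ≠ L := by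
          rw [hlast]; exact Fin.ne_last_of_lt (Fin.castSucc_lt_last p.2)
        have : jres (ext2 p.1 (Fin.castSucc p.2)) = p.2 := by
          apply Fin.castSucc_injective
          rw [jres_spec hneL, hlast]
        rw [res_ext2, this]
      · intro s hs
        simp only [Finset.mem_filter, Finset.mem_univ, true_and] at hs
        obtain ⟨⟨⟨hgood, _⟩, hneL⟩, hne0⟩ := hs
        calc W s = W (ext2 (res s) (s L)) := by rw [ext2_res hgood]
          _ = wf L (s L) * W (res s) := W_ext2 _ _
          _ = aVar * W (res s) := by unfold wf; rw [if_neg hne0, if_neg hneL]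
    rw [step1]
    rw [Finset.sum_finset_product _
      (Finset.univ.filter (fun s' : Fin (n + 1) → Fin (n + 1) => Good s' ∧ fixc s' = m))
      (fun s' => Finset.univ.filter (fun j : Fin (n + 1) => j ≠ 0 ∧ s' j = j))
      (by intro p; simp only [Finset.mem_filter, Finset.mem_univ, true_and])]
    rw [Fn, Finset.mul_sum, Finset.mul_sum]
    apply Finset.sum_congr rfl
    intro s' hs'
    simp only [Finset.mem_filter, Finset.mem_univ, true_and] at hs'
    have hconst : (∑ a ∈ Finset.univ.filter (fun j : Fin (n + 1) => j ≠ 0 ∧ s' j = j),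
        aVar * W (s', a).1)
        = ∑ _a ∈ Finset.univ.filter (fun j : Fin (n + 1) => j ≠ 0 ∧ s' j = j),
            aVar * W s' :=
      Finset.sum_congr rfl (fun a _ => rfl)
    rw [hconst, Finset.sum_const, card_fix_ne_zero hs'.1 hs'.2]
    try rw [nsmul_eq_mul]
    try push_cast
    try ring
  rw [Fn, ← hsplit1, ← hsplit2, sumA, sumB, sumC]
  ring

lemma T_neg : ∀ (n : ℕ) (j : ℤ), j < 0 → T n j = 0 := by
  intro n
  induction n with
  | zero => intro j hj; simp only [T]; rw [if_neg (by omega)]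
  | succ n ih =>
    intro j hj
    simp only [T]
    rw [ih (j - 1) (by omega), ih j hj]
    ring

lemma T_gt : ∀ (n : ℕ) (j : ℤ), (n : ℤ) < j → T n j = 0 := by
  intro n
  induction n with
  | zero => intro j hj; simp only [T]; rw [if_neg (by omega)]
  | succ n ih =>
    intro j hj
    push_cast at hj
    simp only [T]
    rw [ih (j - 1) (by omega), ih j (by omega)]
    ring

lemma Fn_base : Fn 0 1 = 1 := by
  unfold Fn
  have hfilter : Finset.univ.filter (fun s : Fin 1 → Fin 1 => Good s ∧ fixc s = 1)
      = Finset.univ := by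
    apply Finset.filter_true_of_mem
    intro s _
    have hsub : ∀ x y : Fin (0 + 1), x = y := fun x y => Fin.ext (by omega)
    constructor
    · intro i
      exact ⟨hsub _ _, le_of_eq (hsub _ _)⟩
    · unfold fixc
      rw [Finset.filter_true_of_mem (fun i _ => hsub _ _), Finset.card_univ]
      simp
  have hW : ∀ s : Fin 1 → Fin 1, W s = 1 := by
    intro s
    unfold W
    rw [show Finset.univ.filter (fun i : Fin 1 => i ≠ 0) = ∅ from by decide]
    exact Finset.prod_empty
  rw [hfilter]
  rw [Finset.sum_congr rfl (fun s _ => hW s), Finset.sum_const, Finset.card_univ]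
  simp

lemma T_eq_Fn : ∀ (n k : ℕ), k ≤ n → T n (k : ℤ) = Fn n (n + 1 - k) := by
  intro n
  induction n with
  | zero =>
    intro k hk
    interval_cases k
    simp [T, Fn_base]
  | succ n ih =>
    intro k hk
    match k with
    | 0 =>
      have hT0 : T n (((0 : ℕ) : ℤ)) = Fn n (n + 1 - 0) := ih 0 (by omega)
      norm_num at hT0
      simp only [T, Nat.cast_zero]
      rw [T_neg n (0 - 1) (by omega), hT0]
      rw [show n + 1 + 1 - 0 = n + 2 from rfl]
      rw [Fn_succ (n + 2) (by omega)]
      rw [show n + 2 - 1 = n + 1 from rfl]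
      rw [Fn_zero_blocks (n + 2) (Or.inr (by omega))]
      ring
    | k' + 1 =>
      have hk' : k' ≤ n := by omega
      have hT2 : T n ((k' : ℤ) + 1) = Fn n (n - k') := by
        by_cases h : k' + 1 ≤ n
        · have := ih (k' + 1) h
          push_cast at this
          rw [this]
        · have hkn : k' = n := by omega
          rw [T_gt n ((k' : ℤ) + 1) (by omega), show n - k' = 0 from by omega,
            Fn_zero_blocks 0 (Or.inl rfl)]
      simp only [T]
      push_cast
      rw [show ((k' : ℤ) + 1 - 1) = (k' : ℤ) from by ring, ih k' hk', hT2]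
      show _ = Fn (n + 1) (n + 1 - k')
      rw [Fn_succ (n + 1 - k') (by omega)]
      rw [show n + 1 - k' - 1 = n - k' from by omega]
      have hcast : ((n - k' : ℕ) : MvPolynomial (Fin 3) ℤ)
          = ((n : ℤ) + 1 - ((k' : ℤ) + 1) : ℤ) := by
        push_cast [Nat.cast_sub hk']
        ring
      rw [hcast]
      push_cast
      ring

end Aux

/-- For `0 ≤ k ≤ n`, `T(n,k)` is the sum, over all set partitions `π` of
`{1,…,n+1}` into exactly `n+1−k` nonempty blocks, of `∏_{i=2}^{n+1} w_π(i)`.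
(The product over `i = 2,…,n+1` is the product over the nonzero elements of
`Fin (n+1)`.) -/
theorem T_eq_sum_over_partitions (n k : ℕ) (hk : k ≤ n) :
    T n (k : ℤ)
      = ∑ π : {π : Finpartition (Finset.univ : Finset (Fin (n + 1))) //
            π.parts.card = n + 1 - k},
          ∏ i ∈ Finset.univ.filter (fun i : Fin (n + 1) => i ≠ 0), weight π.1 i := by
  rw [T_eq_Fn n k hk, sum_partitions_eq_Fn]
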